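/- Let A_1, …, A_n be events in a probability space with n ≥ 3. Then Pr(⋃_{i=1}^n A_i) ≥ (1/(n−2)) · ( Σ_{i=1}^n Pr(A_i) − ((2n−3)/C(n,2)) · Σ_{1≤i<j≤n} Pr(A_i ∩ A_j) + (3/C(n,2)) · Σ_{1≤i<j<k≤n} Pr(A_i ∩ A_j ∩ A_k) ), where C(n,2) = n(n−1)/2 is the binomial coefficient. -/

import Mathlib

open MeasureTheory Finset

lemma aux_sum_rank {α : Type*} [LinearOrder α] (S : Finset α) (g : ℕ → ℕ) :
    ∑ j ∈ S, g ((S.filter (fun k => j < k)).card) = ∑ t ∈ Finset.range S.card, g t := by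
  classical
  induction S using Finset.induction_on_min with
  | empty => simp
  | insert a s ha ih =>
    have hmem : a ∉ s := fun h => lt_irrefl a (ha a h)
    rw [Finset.sum_insert hmem, Finset.card_insert_of_notMem hmem,
      Finset.sum_range_succ]
    have h1 : (insert a s).filter (fun k => a < k) = s := by
      ext x
      simp only [Finset.mem_filter, Finset.mem_insert]
      constructor
      · rintro ⟨rfl | h, hlt⟩
        · exact absurd hlt (lt_irrefl _)
        · exact h
      · intro hx; exact ⟨Or.inr hx, ha x hx⟩
    have h2 : ∀ j ∈ s, (insert a s).filter (fun k => j < k) = s.filter (fun k => j < k) := by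
      intro j hj
      ext x
      simp only [Finset.mem_filter, Finset.mem_insert]
      constructor
      · rintro ⟨rfl | h, hlt⟩
        · exact absurd (lt_trans (ha j hj) hlt) (lt_irrefl _)
        · exact ⟨h, hlt⟩
      · rintro ⟨hx, hlt⟩; exact ⟨Or.inr hx, hlt⟩
    rw [h1, Finset.sum_congr rfl (fun j hj => by rw [h2 j hj]), ih, add_comm]

lemma aux_sum_range_choose (m k : ℕ) : ∑ t ∈ Finset.range m, t.choose k = m.choose (k + 1) := by
  induction m with
  | zero => simp
  | succ m ih => rw [Finset.sum_range_succ, ih, Nat.choose_succ_succ (m) k, add_comm]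

lemma aux_cast_choose_three (m : ℕ) :
    (m.choose 3 : ℝ) = m * (m - 1) * (m - 2) / 6 := by
  induction m with
  | zero => simp
  | succ m ih =>
    rw [Nat.choose_succ_succ, Nat.cast_add, ih, Nat.cast_choose_two]
    push_cast
    ring

lemma aux_pairs {α : Type*} [LinearOrder α] (S : Finset α) :
    ∑ i ∈ S, (S.filter (fun j => i < j)).card = S.card.choose 2 := by
  classical
  have := aux_sum_rank S id
  rw [show S.card.choose 2 = S.card.choose (1+1) from rfl, ← aux_sum_range_choose S.card 1]
  simpa [Nat.choose_one_right] using this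

lemma aux_triples {α : Type*} [LinearOrder α] (S : Finset α) :
    ∑ i ∈ S, ∑ j ∈ S.filter (fun j => i < j), (S.filter (fun k => j < k)).card
      = S.card.choose 3 := by
  classical
  have hinner : ∀ i ∈ S, ∑ j ∈ S.filter (fun j => i < j), (S.filter (fun k => j < k)).card
      = ((S.filter (fun j => i < j)).card).choose 2 := by
    intro i _
    set T := S.filter (fun j => i < j) with hT
    have hstep : ∀ j ∈ T, S.filter (fun k => j < k) = T.filter (fun k => j < k) := by
      intro j hj
      rw [hT, Finset.filter_filter]
      apply Finset.filter_congr
      intro k _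
      simp only [hT, Finset.mem_filter] at hj
      constructor
      · intro h; exact ⟨lt_trans hj.2 h, h⟩
      · exact fun h => h.2
    rw [Finset.sum_congr rfl (fun j hj => by rw [hstep j hj])]
    exact aux_pairs T
  rw [Finset.sum_congr rfl hinner]
  have := aux_sum_rank S (fun t => t.choose 2)
  rw [this, aux_sum_range_choose]

lemma aux_cast_choose_three' (m : ℕ) :
    (m.choose 3 : ℝ) = m * (m - 1) * (m - 2) / 6 := by
  induction m with
  | zero => simp
  | succ m ih =>
    rw [Nat.choose_succ_succ, Nat.cast_add, ih, Nat.cast_choose_two]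
    push_cast
    ring

lemma aux_key_ineq (n m : ℕ) (hn : 3 ≤ n) (h1 : 1 ≤ m) (hm : m ≤ n) :
    (m : ℝ) - ((2 * (n : ℝ) - 3) / (n.choose 2 : ℝ)) * (m.choose 2 : ℝ)
      + (3 / (n.choose 2 : ℝ)) * (m.choose 3 : ℝ) ≤ (n : ℝ) - 2 := by
  have hn3 : (3 : ℝ) ≤ (n : ℝ) := by exact_mod_cast hn
  have hm1 : (1 : ℝ) ≤ (m : ℝ) := by exact_mod_cast h1
  have hmn : (m : ℝ) ≤ (n : ℝ) := by exact_mod_cast hm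
  have hpos : (0 : ℝ) < (n : ℝ) * ((n : ℝ) - 1) := by nlinarith
  have H : (n : ℝ) * ((n : ℝ) - 1) * m - (2 * (n : ℝ) - 3) * ((m : ℝ) * ((m : ℝ) - 1))
      + (m : ℝ) * ((m : ℝ) - 1) * ((m : ℝ) - 2) ≤ ((n : ℝ) - 2) * ((n : ℝ) * ((n : ℝ) - 1)) := by
    have hcase : m + 2 ≤ n ∨ m + 1 = n ∨ m = n := by omega
    rcases hcase with h | h | h
    · have hmn2 : (m : ℝ) + 2 ≤ (n : ℝ) := by exact_mod_cast h
      have hb1 : (0:ℝ) ≤ (m : ℝ) - 1 := by linarith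
      have hb2 : (0:ℝ) ≤ (n : ℝ) - 1 - m := by linarith
      have hb3 : (0:ℝ) ≤ (n : ℝ) - m := by linarith
      have hprod : ((m : ℝ) - 1) * ((n : ℝ) - 1 - m) * ((n : ℝ) - m)
          ≤ ((n : ℝ) - 3) * ((n : ℝ) - 1) * (n : ℝ) := by
        have t1 : ((m : ℝ) - 1) * ((n : ℝ) - 1 - m) ≤ ((n : ℝ) - 3) * ((n : ℝ) - 1) := by
          apply mul_le_mul (by linarith) (by linarith) hb2 (by linarith)
        apply mul_le_mul t1 (by linarith) hb3 (mul_nonneg (by linarith) (by linarith))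
      nlinarith [hprod]
    · have hmn1 : (m : ℝ) = (n : ℝ) - 1 := by
        have : (m : ℝ) + 1 = (n : ℝ) := by exact_mod_cast h
        linarith
      have h0 : (0:ℝ) ≤ (n : ℝ) * ((n : ℝ) - 1) * ((n : ℝ) - 3) := by
        apply mul_nonneg (by nlinarith) (by linarith)
      rw [hmn1]; nlinarith [h0]
    · have hmn1 : (m : ℝ) = (n : ℝ) := by exact_mod_cast h
      have h0 : (0:ℝ) ≤ (n : ℝ) * ((n : ℝ) - 1) * ((n : ℝ) - 3) := by
        apply mul_nonneg (by nlinarith) (by linarith)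
      rw [hmn1]; nlinarith [h0]
  rw [Nat.cast_choose_two, Nat.cast_choose_two, aux_cast_choose_three']
  have hne : (n : ℝ) * ((n : ℝ) - 1) ≠ 0 := ne_of_gt hpos
  calc (m : ℝ) - ((2 * (n : ℝ) - 3) / ((n : ℝ) * ((n : ℝ) - 1) / 2)) * ((m : ℝ) * ((m : ℝ) - 1) / 2)
        + (3 / ((n : ℝ) * ((n : ℝ) - 1) / 2)) * ((m : ℝ) * ((m : ℝ) - 1) * ((m : ℝ) - 2) / 6)
      = ((n : ℝ) * ((n : ℝ) - 1) * m - (2 * (n : ℝ) - 3) * ((m : ℝ) * ((m : ℝ) - 1))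
          + (m : ℝ) * ((m : ℝ) - 1) * ((m : ℝ) - 2)) / ((n : ℝ) * ((n : ℝ) - 1)) := by
        have hn1 : (n : ℝ) - 1 ≠ 0 := by linarith
        have hn0 : (n : ℝ) ≠ 0 := by linarith
        field_simp
        ring
    _ ≤ (((n : ℝ) - 2) * ((n : ℝ) * ((n : ℝ) - 1))) / ((n : ℝ) * ((n : ℝ) - 1)) := by
        gcongr
    _ = (n : ℝ) - 2 := mul_div_cancel_right₀ _ hne

lemma conv1 {n : ℕ} (p : Fin n → Prop) [DecidablePred p] :
    ∑ i : Fin n, (if p i then (1:ℝ) else 0) = ((univ.filter p).card : ℝ) := by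
  simp

lemma conv2 {n : ℕ} (p : Fin n → Prop) [DecidablePred p] :
    ∑ i : Fin n, ∑ j ∈ univ.filter (fun j => i < j),
        ((if p i then (1:ℝ) else 0) * (if p j then (1:ℝ) else 0))
      = (((univ.filter p).card).choose 2 : ℝ) := by
  have step1 : ∀ i : Fin n,
      ∑ j ∈ univ.filter (fun j => i < j),
          ((if p i then (1:ℝ) else 0) * (if p j then (1:ℝ) else 0))
        = if p i then (((univ.filter p).filter (fun j => i < j)).card : ℝ) else 0 := by
    intro i
    by_cases hpi : p i
    · simp [hpi, Finset.filter_comm]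
    · simp [hpi]
  rw [Finset.sum_congr rfl (fun i _ => step1 i), ← Finset.sum_filter, ← Nat.cast_sum,
    aux_pairs]

lemma conv3 {n : ℕ} (p : Fin n → Prop) [DecidablePred p] :
    ∑ i : Fin n, ∑ j ∈ univ.filter (fun j => i < j), ∑ k ∈ univ.filter (fun k => j < k),
        ((if p i then (1:ℝ) else 0) * (if p j then (1:ℝ) else 0) * (if p k then (1:ℝ) else 0))
      = (((univ.filter p).card).choose 3 : ℝ) := by
  have step0 : ∀ j : Fin n,
      ∑ k ∈ univ.filter (fun k => j < k), (if p k then (1:ℝ) else 0)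
        = (((univ.filter p).filter (fun k => j < k)).card : ℝ) := by
    intro j; simp [Finset.filter_comm]
  have step1 : ∀ i : Fin n,
      ∑ j ∈ univ.filter (fun j => i < j), ∑ k ∈ univ.filter (fun k => j < k),
          ((if p i then (1:ℝ) else 0) * (if p j then (1:ℝ) else 0) * (if p k then (1:ℝ) else 0))
        = if p i then
            ∑ j ∈ (univ.filter p).filter (fun j => i < j),
              (((univ.filter p).filter (fun k => j < k)).card : ℝ) else 0 := by
    intro i
    by_cases hpi : p i
    · simp only [hpi, if_true, one_mul]
      have hr : ∑ j ∈ (univ.filter p).filter (fun j => i < j),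
            (((univ.filter p).filter (fun k => j < k)).card : ℝ)
          = ∑ j ∈ univ.filter (fun j => i < j),
            (if p j then (((univ.filter p).filter (fun k => j < k)).card : ℝ) else 0) := by
        rw [Finset.filter_comm, Finset.sum_filter]
      rw [hr]
      apply Finset.sum_congr rfl
      intro j _
      by_cases hpj : p j
      · simp only [hpj, if_true, one_mul, step0 j]
      · simp [hpj]
    · simp [hpi]
  rw [Finset.sum_congr rfl (fun i _ => step1 i), ← Finset.sum_filter]
  push_cast [← aux_triples (univ.filter p)]
  rfl

theorem kwerel_lower_analogue_deg3 {Ω : Type*} [MeasurableSpace Ω]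
    (μ : Measure Ω) [IsProbabilityMeasure μ] (n : ℕ) (hn : 3 ≤ n)
    (A : Fin n → Set Ω) (hA : ∀ i, MeasurableSet (A i)) :
    (μ (⋃ i, A i)).toReal ≥
      (1 / ((n : ℝ) - 2)) *
        (∑ i, (μ (A i)).toReal -
          ((2 * (n : ℝ) - 3) / (n.choose 2 : ℝ)) *
            (∑ i, ∑ j ∈ univ.filter (fun j => i < j), (μ (A i ∩ A j)).toReal) +
          (3 / (n.choose 2 : ℝ)) *
            ∑ i, ∑ j ∈ univ.filter (fun j => i < j),
              ∑ k ∈ univ.filter (fun k => j < k), (μ (A i ∩ A j ∩ A k)).toReal) := by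
  classical
  have hn3 : (3 : ℝ) ≤ (n : ℝ) := by exact_mod_cast hn
  have hn2 : (0 : ℝ) < (n : ℝ) - 2 := by linarith
  set f : Fin n → Ω → ℝ := fun i => (A i).indicator (1 : Ω → ℝ) with hf
  have hInt : ∀ (s : Set Ω), MeasurableSet s → Integrable (s.indicator (1 : Ω → ℝ)) μ :=
    fun s hs => (integrable_const 1).indicator hs
  have hprod2 : ∀ i j, (fun ω => f i ω * f j ω) = (A i ∩ A j).indicator (1 : Ω → ℝ) := by
    intro i j
    funext ω
    by_cases h1 : ω ∈ A i <;> by_cases h2 : ω ∈ A j <;>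
      simp [hf, Set.indicator_apply, h1, h2, Set.mem_inter_iff]
  have hprod3 : ∀ i j k, (fun ω => f i ω * f j ω * f k ω)
      = (A i ∩ A j ∩ A k).indicator (1 : Ω → ℝ) := by
    intro i j k
    funext ω
    by_cases h1 : ω ∈ A i <;> by_cases h2 : ω ∈ A j <;> by_cases h3 : ω ∈ A k <;>
      simp [hf, Set.indicator_apply, h1, h2, h3, Set.mem_inter_iff]
  have hint1 : ∀ i, Integrable (f i) μ := fun i => hInt _ (hA i)
  have hint2 : ∀ i j, Integrable (fun ω => f i ω * f j ω) μ := by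
    intro i j; rw [hprod2 i j]; exact hInt _ ((hA i).inter (hA j))
  have hint3 : ∀ i j k, Integrable (fun ω => f i ω * f j ω * f k ω) μ := by
    intro i j k; rw [hprod3 i j k]; exact hInt _ (((hA i).inter (hA j)).inter (hA k))
  -- the three functions
  set F1 : Ω → ℝ := fun ω => ∑ i, f i ω with hF1
  set F2 : Ω → ℝ := fun ω => ∑ i, ∑ j ∈ univ.filter (fun j => i < j), f i ω * f j ω with hF2
  set F3 : Ω → ℝ := fun ω => ∑ i, ∑ j ∈ univ.filter (fun j => i < j),
      ∑ k ∈ univ.filter (fun k => j < k), f i ω * f j ω * f k ω with hF3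
  have hIF1 : Integrable F1 μ := integrable_finset_sum _ (fun i _ => hint1 i)
  have hIF2 : Integrable F2 μ :=
    integrable_finset_sum _ (fun i _ => integrable_finset_sum _ (fun j _ => hint2 i j))
  have hIF3 : Integrable F3 μ :=
    integrable_finset_sum _ (fun i _ => integrable_finset_sum _
      (fun j _ => integrable_finset_sum _ (fun k _ => hint3 i j k)))
  have e1 : ∑ i, (μ (A i)).toReal = ∫ ω, F1 ω ∂μ := by
    rw [hF1, integral_finset_sum _ (fun i _ => hint1 i)]
    exact Finset.sum_congr rfl fun i _ => (integral_indicator_one (hA i)).symm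
  have e2 : ∑ i, ∑ j ∈ univ.filter (fun j => i < j), (μ (A i ∩ A j)).toReal
      = ∫ ω, F2 ω ∂μ := by
    rw [hF2, integral_finset_sum _ (fun i _ => integrable_finset_sum _ (fun j _ => hint2 i j))]
    refine Finset.sum_congr rfl fun i _ => ?_
    rw [integral_finset_sum _ (fun j _ => hint2 i j)]
    refine Finset.sum_congr rfl fun j _ => ?_
    rw [← measureReal_def, ← integral_indicator_one ((hA i).inter (hA j)), ← hprod2 i j]
  have e3 : ∑ i, ∑ j ∈ univ.filter (fun j => i < j), ∑ k ∈ univ.filter (fun k => j < k),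
        (μ (A i ∩ A j ∩ A k)).toReal = ∫ ω, F3 ω ∂μ := by
    rw [hF3, integral_finset_sum _ (fun i _ => integrable_finset_sum _
      (fun j _ => integrable_finset_sum _ (fun k _ => hint3 i j k)))]
    refine Finset.sum_congr rfl fun i _ => ?_
    rw [integral_finset_sum _ (fun j _ => integrable_finset_sum _ (fun k _ => hint3 i j k))]
    refine Finset.sum_congr rfl fun j _ => ?_
    rw [integral_finset_sum _ (fun k _ => hint3 i j k)]
    refine Finset.sum_congr rfl fun k _ => ?_
    rw [← measureReal_def, ← integral_indicator_one (((hA i).inter (hA j)).inter (hA k)), ← hprod3 i j k]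
  have hUmeas : MeasurableSet (⋃ i, A i) := MeasurableSet.iUnion fun i => hA i
  set c2 : ℝ := (2 * (n : ℝ) - 3) / (n.choose 2 : ℝ) with hc2
  set c3 : ℝ := 3 / (n.choose 2 : ℝ) with hc3
  rw [ge_iff_le, one_div, inv_mul_le_iff₀ hn2]
  have etot : ∫ ω, (F1 ω - c2 * F2 ω + c3 * F3 ω) ∂μ
      = ∫ ω, F1 ω ∂μ - c2 * ∫ ω, F2 ω ∂μ + c3 * ∫ ω, F3 ω ∂μ := by
    have hIa : Integrable (fun ω => F1 ω - c2 * F2 ω) μ := hIF1.sub (hIF2.const_mul c2)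
    have hIb : Integrable (fun ω => c3 * F3 ω) μ := hIF3.const_mul c3
    have hIc : Integrable (fun ω => c2 * F2 ω) μ := hIF2.const_mul c2
    rw [integral_add hIa hIb, integral_sub hIF1 hIc, integral_const_mul, integral_const_mul]
  rw [e1, e2, e3, ← etot]
  have eU : ((n : ℝ) - 2) * (μ (⋃ i, A i)).toReal
      = ∫ ω, ((n : ℝ) - 2) * (⋃ i, A i).indicator (1 : Ω → ℝ) ω ∂μ := by
    rw [integral_const_mul, integral_indicator_one hUmeas, measureReal_def]
  rw [eU]
  apply integral_mono
  · exact ((hIF1.sub (hIF2.const_mul c2)).add (hIF3.const_mul c3) : Integrable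
      (fun ω => F1 ω - c2 * F2 ω + c3 * F3 ω) μ)
  · exact (((hInt _ hUmeas).const_mul _ : Integrable
      (fun ω => ((n : ℝ) - 2) * (⋃ i, A i).indicator (1 : Ω → ℝ) ω) μ))
  -- pointwise inequality
  intro ω
  simp only [Pi.add_apply, Pi.sub_apply]
  have hfapp : ∀ i, f i ω = if ω ∈ A i then (1:ℝ) else 0 := by
    intro i; simp [hf, Set.indicator_apply]
  set p : Fin n → Prop := fun i => ω ∈ A i with hp
  set S : Finset (Fin n) := univ.filter p with hS
  have hv1 : F1 ω = (S.card : ℝ) := by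
    rw [hF1]; simp only [hfapp]; exact conv1 p
  have hv2 : F2 ω = ((S.card.choose 2 : ℕ) : ℝ) := by
    rw [hF2]; simp only [hfapp]; exact conv2 p
  have hv3 : F3 ω = ((S.card.choose 3 : ℕ) : ℝ) := by
    rw [hF3]; simp only [hfapp]; exact conv3 p
  rw [hv1, hv2, hv3]
  by_cases hne : S.Nonempty
  · have hω : ω ∈ ⋃ i, A i := by
      obtain ⟨i, hi⟩ := hne
      rw [hS, Finset.mem_filter] at hi
      exact Set.mem_iUnion.2 ⟨i, hi.2⟩
    have hU1 : (⋃ i, A i).indicator (1 : Ω → ℝ) ω = 1 := by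
      simp [Set.indicator_apply, hω]
    rw [hU1, mul_one]
    have h1 : 1 ≤ S.card := Finset.card_pos.2 hne
    have hm : S.card ≤ n := le_trans (Finset.card_le_univ S) (by simp)
    exact aux_key_ineq n S.card hn h1 hm
  · have hSe : S = ∅ := Finset.not_nonempty_iff_eq_empty.1 hne
    have hω : ω ∉ ⋃ i, A i := by
      rw [Set.mem_iUnion]
      rintro ⟨i, hi⟩
      exact hne ⟨i, by simp [hS, hp, hi]⟩
    have hU0 : (⋃ i, A i).indicator (1 : Ω → ℝ) ω = 0 := by
      simp [Set.indicator_apply, hω]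
    rw [hU0, hSe]
    simp
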